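/- Let X, U be finite sets, f : X × U × P(X) → P(X) a transition kernel, φ : X × P(X) → P(U) a policy, and define the pushforward map F(μ)(x') = ∑_{x∈X} ∑_{u∈U} f(x'|x,u,μ) φ(u|x,μ) μ(x). Suppose for all fixed (x,u): ∑_{x'} |f(x'|x,u,μ) − f(x'|x,u,μ')| ≤ L_f · 2 d_TV(μ,μ'), and for all x: ∑_u |φ(u|x,μ) − φ(u|x,μ')| ≤ L_φ · 2 d_TV(μ,μ'). Then d_TV(F(μ), F(μ')) ≤ (1 + L_f + L_φ) · d_TV(μ, μ'). -/
import Mathlib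


theorem mean_field_propagation_lipschitz
    {X U : Type*} [Fintype X] [Fintype U]
    (f : X → X → U → (X → ℝ) → ℝ)   -- f x' x u μ = f(x'|x,u,μ)
    (φ : U → X → (X → ℝ) → ℝ)       -- φ u x μ = φ(u|x,μ)
    (Lf Lφ : ℝ)
    (hf_pmf : ∀ x u μ, (∀ x', 0 ≤ f x' x u μ) ∧ ∑ x', f x' x u μ = 1)
    (hφ_pmf : ∀ x μ, (∀ u, 0 ≤ φ u x μ) ∧ ∑ u, φ u x μ = 1)
    (hf_lip : ∀ x u μ μ',
      ∑ x', |f x' x u μ - f x' x u μ'| ≤ Lf * (2 * ((1 / 2) * ∑ x, |μ x - μ' x|)))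
    (hφ_lip : ∀ x μ μ',
      ∑ u, |φ u x μ - φ u x μ'| ≤ Lφ * (2 * ((1 / 2) * ∑ x, |μ x - μ' x|)))
    (μ μ' : X → ℝ)
    (hμ : (∀ x, 0 ≤ μ x) ∧ ∑ x, μ x = 1)
    (hμ' : (∀ x, 0 ≤ μ' x) ∧ ∑ x, μ' x = 1) :
    (1 / 2) * ∑ x', |(∑ x, ∑ u, f x' x u μ * φ u x μ * μ x)
        - (∑ x, ∑ u, f x' x u μ' * φ u x μ' * μ' x)|
      ≤ (1 + Lf + Lφ) * ((1 / 2) * ∑ x, |μ x - μ' x|) := by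
  have hD0 : (0:ℝ) ≤ ∑ x, |μ x - μ' x| := Finset.sum_nonneg fun _ _ => abs_nonneg _
  set D : ℝ := ∑ x, |μ x - μ' x| with hDdef
  have hf_lip' : ∀ x u, ∑ x', |f x' x u μ - f x' x u μ'| ≤ Lf * D :=
    fun x u => (hf_lip x u μ μ').trans_eq (by ring)
  have hφ_lip' : ∀ x, ∑ u, |φ u x μ - φ u x μ'| ≤ Lφ * D :=
    fun x => (hφ_lip x μ μ').trans_eq (by ring)
  -- per (x,u) bound
  have key : ∀ x u, ∑ x', |f x' x u μ * φ u x μ * μ x - f x' x u μ' * φ u x μ' * μ' x|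
      ≤ Lf * D * (φ u x μ * μ x) + |φ u x μ * μ x - φ u x μ' * μ' x| := by
    intro x u
    have h1 : ∀ x', |f x' x u μ * φ u x μ * μ x - f x' x u μ' * φ u x μ' * μ' x|
        ≤ |f x' x u μ - f x' x u μ'| * (φ u x μ * μ x)
          + f x' x u μ' * |φ u x μ * μ x - φ u x μ' * μ' x| := by
      intro x'
      have hrw : f x' x u μ * φ u x μ * μ x - f x' x u μ' * φ u x μ' * μ' x
          = (f x' x u μ - f x' x u μ') * (φ u x μ * μ x)
            + f x' x u μ' * (φ u x μ * μ x - φ u x μ' * μ' x) := by ring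
      rw [hrw]
      refine (abs_add_le _ _).trans ?_
      rw [abs_mul, abs_mul, abs_mul, abs_of_nonneg ((hφ_pmf x μ).1 u),
        abs_of_nonneg (hμ.1 x), abs_of_nonneg ((hf_pmf x u μ').1 x')]
    calc ∑ x', |f x' x u μ * φ u x μ * μ x - f x' x u μ' * φ u x μ' * μ' x|
        ≤ ∑ x', (|f x' x u μ - f x' x u μ'| * (φ u x μ * μ x)
          + f x' x u μ' * |φ u x μ * μ x - φ u x μ' * μ' x|) :=
          Finset.sum_le_sum fun x' _ => h1 x'
      _ = (∑ x', |f x' x u μ - f x' x u μ'|) * (φ u x μ * μ x)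
          + (∑ x', f x' x u μ') * |φ u x μ * μ x - φ u x μ' * μ' x| := by
          rw [Finset.sum_add_distrib, ← Finset.sum_mul, ← Finset.sum_mul]
      _ ≤ Lf * D * (φ u x μ * μ x) + |φ u x μ * μ x - φ u x μ' * μ' x| := by
          refine add_le_add
            (mul_le_mul_of_nonneg_right (hf_lip' x u)
              (mul_nonneg ((hφ_pmf x μ).1 u) (hμ.1 x))) (le_of_eq ?_)
          rw [(hf_pmf x u μ').2, one_mul]
  -- per x bound after summing over u
  have key2 : ∀ x, ∑ u, (Lf * D * (φ u x μ * μ x) + |φ u x μ * μ x - φ u x μ' * μ' x|)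
      ≤ Lf * D * μ x + Lφ * D * μ x + |μ x - μ' x| := by
    intro x
    rw [Finset.sum_add_distrib]
    have e1 : ∑ u, Lf * D * (φ u x μ * μ x) = Lf * D * μ x := by
      rw [← Finset.mul_sum, ← Finset.sum_mul, (hφ_pmf x μ).2, one_mul]
    have e2 : ∑ u, |φ u x μ * μ x - φ u x μ' * μ' x| ≤ Lφ * D * μ x + |μ x - μ' x| := by
      have h1 : ∀ u, |φ u x μ * μ x - φ u x μ' * μ' x|
          ≤ |φ u x μ - φ u x μ'| * μ x + φ u x μ' * |μ x - μ' x| := by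
        intro u
        have hrw : φ u x μ * μ x - φ u x μ' * μ' x
            = (φ u x μ - φ u x μ') * μ x + φ u x μ' * (μ x - μ' x) := by ring
        rw [hrw]
        refine (abs_add_le _ _).trans ?_
        rw [abs_mul, abs_mul, abs_of_nonneg (hμ.1 x), abs_of_nonneg ((hφ_pmf x μ').1 u)]
      calc ∑ u, |φ u x μ * μ x - φ u x μ' * μ' x|
          ≤ ∑ u, (|φ u x μ - φ u x μ'| * μ x + φ u x μ' * |μ x - μ' x|) :=
            Finset.sum_le_sum fun u _ => h1 u
        _ = (∑ u, |φ u x μ - φ u x μ'|) * μ x + (∑ u, φ u x μ') * |μ x - μ' x| := by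
            rw [Finset.sum_add_distrib, ← Finset.sum_mul, ← Finset.sum_mul]
        _ ≤ Lφ * D * μ x + |μ x - μ' x| := by
            refine add_le_add (mul_le_mul_of_nonneg_right (hφ_lip' x) (hμ.1 x)) (le_of_eq ?_)
            rw [(hφ_pmf x μ').2, one_mul]
    rw [e1]
    linarith [e2]
  have main : ∑ x', |(∑ x, ∑ u, f x' x u μ * φ u x μ * μ x)
      - (∑ x, ∑ u, f x' x u μ' * φ u x μ' * μ' x)| ≤ Lf * D + Lφ * D + D := by
    calc ∑ x', |(∑ x, ∑ u, f x' x u μ * φ u x μ * μ x)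
        - (∑ x, ∑ u, f x' x u μ' * φ u x μ' * μ' x)|
        ≤ ∑ x', ∑ x, ∑ u, |f x' x u μ * φ u x μ * μ x - f x' x u μ' * φ u x μ' * μ' x| := by
          refine Finset.sum_le_sum fun x' _ => ?_
          rw [← Finset.sum_sub_distrib]
          refine (Finset.abs_sum_le_sum_abs _ _).trans (Finset.sum_le_sum fun x _ => ?_)
          rw [← Finset.sum_sub_distrib]
          exact Finset.abs_sum_le_sum_abs _ _
      _ = ∑ x, ∑ u, ∑ x', |f x' x u μ * φ u x μ * μ x - f x' x u μ' * φ u x μ' * μ' x| := by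
          rw [Finset.sum_comm]
          exact Finset.sum_congr rfl fun x _ => Finset.sum_comm
      _ ≤ ∑ x, (Lf * D * μ x + Lφ * D * μ x + |μ x - μ' x|) := by
          refine Finset.sum_le_sum fun x _ => ?_
          exact le_trans (Finset.sum_le_sum fun u _ => key x u) (key2 x)
      _ = Lf * D + Lφ * D + D := by
          rw [Finset.sum_add_distrib, Finset.sum_add_distrib, ← Finset.mul_sum,
            ← Finset.mul_sum, hμ.2, mul_one, mul_one]
  linarith [main]
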